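/- arXiv:1604.08000 — 2 statements merged into one kernel-verified Lean document; each statement's English description precedes it below -/
import Mathlib

section
/- Let p be an odd prime and let c, M be positive integers with gcd(p, cM) = 1. Let r, n be integers. Then the average of twisted Kloosterman sums over all Dirichlet characters ψ modulo p satisfies the exact identity ∑_{ψ mod p} (1 − ψ(−1)) · S_ψ(r, n; c·p·M) = (p − 1) · S(p̄·r, p̄·n; c·M) · ( e_p( q̄·(r+n) ) − e_p( −q̄·(r+n) ) ), where p̄ denotes an integer inverse of p modulo cM and q̄ denotes an integer inverse of cM modulo p. -/
open Complex

/-- `eAdd q x = exp(2πi x / q)`. -/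
noncomputable def eAdd (q : ℕ) (x : ℤ) : ℂ :=
  Complex.exp (2 * Real.pi * Complex.I * x / q)

/-- The Kloosterman sum `S(m, n; q) = ∑_{x mod q, (x,q)=1} e_q(m x + n x*)`. -/
noncomputable def klo (m n : ℤ) (q : ℕ) [NeZero q] : ℂ :=
  ∑ x : (ZMod q)ˣ,
    eAdd q (m * ((x : ZMod q).val : ℤ) + n * (((x⁻¹ : (ZMod q)ˣ) : ZMod q).val : ℤ))

/-- The twisted Kloosterman sum `S_ψ(m, n; q)` for a Dirichlet character `ψ` mod `d`, `d ∣ q`. -/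
noncomputable def kloTwist {d : ℕ} (ψ : DirichletCharacter ℂ d) (m n : ℤ) (q : ℕ)
    [NeZero q] (h : d ∣ q) : ℂ :=
  ∑ x : (ZMod q)ˣ,
    ψ (ZMod.castHom h (ZMod d) (x : ZMod q)) *
      eAdd q (m * ((x : ZMod q).val : ℤ) + n * (((x⁻¹ : (ZMod q)ˣ) : ZMod q).val : ℤ))

lemma eAdd_congr (q : ℕ) [NeZero q] {x y : ℤ} (h : ((x : ZMod q) : ZMod q) = (y : ZMod q)) :
    eAdd q x = eAdd q y := by
  have hd : (q : ℤ) ∣ x - y := by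
    rwa [← ZMod.intCast_zmod_eq_zero_iff_dvd, Int.cast_sub, sub_eq_zero]
  obtain ⟨k, hk⟩ := hd
  have hx : x = y + q * k := by linarith
  have hq : (q : ℂ) ≠ 0 := Nat.cast_ne_zero.mpr (NeZero.ne q)
  rw [eAdd, eAdd, hx]
  push_cast
  rw [show 2 * (Real.pi:ℂ) * I * (y + q * k) / q
      = 2 * Real.pi * I * y / q + k * (2 * Real.pi * I) by field_simp]
  rw [Complex.exp_add, Complex.exp_int_mul_two_pi_mul_I, mul_one]

lemma eAdd_add (q : ℕ) (x y : ℤ) : eAdd q (x + y) = eAdd q x * eAdd q y := by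
  rw [eAdd, eAdd, eAdd, ← Complex.exp_add]
  congr 1
  push_cast
  ring

lemma eAdd_split (p c M : ℕ) [hp : Fact p.Prime] [NeZero c] [NeZero M]
    (hcop : Nat.gcd p (c * M) = 1)
    (pbar : ℤ) (hpbar : (((p : ℤ) * pbar : ℤ) : ZMod (c * M)) = 1)
    (qbar : ℤ) (hqbar : ((((c * M : ℕ) : ℤ) * qbar : ℤ) : ZMod p) = 1) (y : ℤ) :
    eAdd (c * p * M) y = eAdd p (qbar * y) * eAdd (c * M) (pbar * y) := by
  have hc0 : (c : ℂ) ≠ 0 := Nat.cast_ne_zero.mpr (NeZero.ne _)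
  have hM0 : (M : ℂ) ≠ 0 := Nat.cast_ne_zero.mpr (NeZero.ne _)
  have hpc : ((p : ℕ) : ℂ) ≠ 0 := Nat.cast_ne_zero.mpr (NeZero.ne _)
  have h1 : eAdd p (qbar * y) = eAdd (c * p * M) ((c * M : ℕ) * qbar * y) := by
    rw [eAdd, eAdd]
    congr 1
    push_cast
    field_simp
  have h2 : eAdd (c * M) (pbar * y) = eAdd (c * p * M) ((p : ℤ) * pbar * y) := by
    rw [eAdd, eAdd]
    congr 1
    push_cast
    field_simp
  rw [h1, h2, ← eAdd_add]
  refine (eAdd_congr _ ?_).symm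
  have hz : ((c * p * M : ℕ) : ℤ) ∣ ((c * M : ℕ) : ℤ) * qbar + (p : ℤ) * pbar - 1 := by
    have hdp : ((p : ℕ) : ℤ) ∣ ((c * M : ℕ) : ℤ) * qbar + (p : ℤ) * pbar - 1 := by
      rw [← ZMod.intCast_zmod_eq_zero_iff_dvd]
      push_cast
      push_cast at hqbar
      rw [hqbar]
      have : ((p : ZMod p)) = 0 := by exact_mod_cast ZMod.natCast_self p
      rw [this]
      ring
    have hdcm : ((c * M : ℕ) : ℤ) ∣ ((c * M : ℕ) : ℤ) * qbar + (p : ℤ) * pbar - 1 := by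
      rw [← ZMod.intCast_zmod_eq_zero_iff_dvd]
      push_cast
      push_cast at hpbar
      rw [hpbar]
      have : ((c : ZMod (c*M)) * M) = 0 := by
        rw [← Nat.cast_mul, ZMod.natCast_self]
      linear_combination qbar * this
    have hco : IsCoprime ((p : ℕ) : ℤ) ((c * M : ℕ) : ℤ) := by
      rw [Int.isCoprime_iff_gcd_eq_one, Int.gcd_natCast_natCast]
      exact hcop
    have := hco.mul_dvd hdp hdcm
    have heq : ((p : ℕ) : ℤ) * ((c * M : ℕ) : ℤ) = ((c * p * M : ℕ) : ℤ) := by push_cast; ring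
    rwa [heq] at this
  have key := (ZMod.intCast_zmod_eq_zero_iff_dvd _ (c*p*M)).mpr hz
  push_cast at key ⊢
  linear_combination y * key

lemma sum_factor {α β γ : Type*} [Fintype α] [Fintype β] [Fintype γ]
    (e : α ≃ β × γ) (f : α → ℂ) (F : β → ℂ) (G : γ → ℂ)
    (h : ∀ x, f x = F (e x).1 * G (e x).2) :
    ∑ x, f x = (∑ b, F b) * (∑ c, G c) := by
  rw [Fintype.sum_equiv e f (fun y => F y.1 * G y.2) h, Finset.sum_mul_sum]
  rw [Fintype.sum_prod_type]

/-- Averaging twisted Kloosterman sums over all Dirichlet characters mod an odd prime `p`. -/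
theorem stmt_0 (p : ℕ) [hp : Fact p.Prime] (hodd : Odd p)
    (c M : ℕ) [NeZero c] [NeZero M] (hcop : Nat.gcd p (c * M) = 1) (r n : ℤ)
    (pbar : ℤ) (hpbar : (((p : ℤ) * pbar : ℤ) : ZMod (c * M)) = 1)
    (qbar : ℤ) (hqbar : ((((c * M : ℕ) : ℤ) * qbar : ℤ) : ZMod p) = 1) :
    ∑ ψ : DirichletCharacter ℂ p,
        (1 - ψ (-1)) * kloTwist ψ r n (c * p * M) ⟨c * M, by ring⟩ =
      ((p : ℂ) - 1) * klo (pbar * r) (pbar * n) (c * M) *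
        (eAdd p (qbar * (r + n)) - eAdd p (-(qbar * (r + n)))) := by
  have hco : Nat.Coprime p (c * M) := hcop
  have hdvd_p : p ∣ c * p * M := ⟨c * M, by ring⟩
  have hdvd_cM : (c * M) ∣ c * p * M := ⟨p, by ring⟩
  -- CRT equivalences
  set χ : ZMod (c * p * M) ≃+* ZMod p × ZMod (c * M) :=
    (ZMod.ringEquivCongr (show c * p * M = p * (c * M) by ring)).trans
      (ZMod.chineseRemainder hco) with hχ
  set E : (ZMod (c * p * M))ˣ ≃* (ZMod p)ˣ × (ZMod (c * M))ˣ :=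
    (Units.mapEquiv χ.toMulEquiv).trans MulEquiv.prodUnits with hE
  have hfst : ∀ y : ZMod (c * p * M), (χ y).1 = ZMod.castHom hdvd_p (ZMod p) y := by
    intro y
    have h : (RingHom.fst (ZMod p) (ZMod (c * M))).comp χ.toRingHom
        = ZMod.castHom hdvd_p (ZMod p) := RingHom.ext_zmod _ _
    exact RingHom.congr_fun h y
  have hsnd : ∀ y : ZMod (c * p * M), (χ y).2 = ZMod.castHom hdvd_cM (ZMod (c * M)) y := by
    intro y
    have h : (RingHom.snd (ZMod p) (ZMod (c * M))).comp χ.toRingHom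
        = ZMod.castHom hdvd_cM (ZMod (c * M)) := RingHom.ext_zmod _ _
    exact RingHom.congr_fun h y
  have hEfst : ∀ x : (ZMod (c * p * M))ˣ,
      (((E x).1 : (ZMod p)ˣ) : ZMod p) = ZMod.castHom hdvd_p (ZMod p) (x : ZMod (c * p * M)) := by
    intro x
    have : (((E x).1 : (ZMod p)ˣ) : ZMod p) = (χ (x : ZMod (c * p * M))).1 := rfl
    rw [this, hfst]
  have hEsnd : ∀ x : (ZMod (c * p * M))ˣ,
      (((E x).2 : (ZMod (c * M))ˣ) : ZMod (c * M))
        = ZMod.castHom hdvd_cM (ZMod (c * M)) (x : ZMod (c * p * M)) := by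
    intro x
    have : (((E x).2 : (ZMod (c * M))ˣ) : ZMod (c * M)) = (χ (x : ZMod (c * p * M))).2 := rfl
    rw [this, hsnd]
  -- the component exponential functions
  set F : (ZMod p)ˣ → ℂ := fun a =>
    eAdd p (qbar * (r * ((a : ZMod p).val : ℤ) + n * (((a⁻¹ : (ZMod p)ˣ) : ZMod p).val : ℤ)))
    with hF
  set G : (ZMod (c * M))ˣ → ℂ := fun b =>
    eAdd (c * M) ((pbar * r) * ((b : ZMod (c * M)).val : ℤ)
      + (pbar * n) * (((b⁻¹ : (ZMod (c * M))ˣ) : ZMod (c * M)).val : ℤ)) with hG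
  -- factorization of the exponential term
  have hfactor : ∀ x : (ZMod (c * p * M))ˣ,
      eAdd (c * p * M) (r * ((x : ZMod (c * p * M)).val : ℤ)
          + n * (((x⁻¹ : (ZMod (c * p * M))ˣ) : ZMod (c * p * M)).val : ℤ))
        = F (E x).1 * G (E x).2 := by
    intro x
    have hinv1 : (E x⁻¹).1 = ((E x).1)⁻¹ := by rw [map_inv]; rfl
    have hinv2 : (E x⁻¹).2 = ((E x).2)⁻¹ := by rw [map_inv]; rfl
    rw [eAdd_split p c M hcop pbar hpbar qbar hqbar]
    congr 1
    · refine eAdd_congr p ?_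
      have h1 : (((x : ZMod (c * p * M)).val : ℕ) : ZMod p) = (((E x).1 : (ZMod p)ˣ) : ZMod p) := by
        rw [hEfst x, ZMod.castHom_apply, ZMod.natCast_val]
      have h2 : ((((x⁻¹ : (ZMod (c * p * M))ˣ) : ZMod (c * p * M)).val : ℕ) : ZMod p)
          = ((((E x).1)⁻¹ : (ZMod p)ˣ) : ZMod p) := by
        rw [← hinv1, hEfst x⁻¹, ZMod.castHom_apply, ZMod.natCast_val]
      have h3 : ((((E x).1 : (ZMod p)ˣ) : ZMod p).val : ZMod p)
          = (((E x).1 : (ZMod p)ˣ) : ZMod p) := by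
        rw [ZMod.natCast_val, ZMod.cast_id]
      have h4 : (((((E x).1)⁻¹ : (ZMod p)ˣ) : ZMod p).val : ZMod p)
          = ((((E x).1)⁻¹ : (ZMod p)ˣ) : ZMod p) := by
        rw [ZMod.natCast_val, ZMod.cast_id]
      push_cast
      rw [ZMod.inv_coe_unit, h1, h2, h3, h4]
    · refine eAdd_congr (c * M) ?_
      have h1 : (((x : ZMod (c * p * M)).val : ℕ) : ZMod (c * M))
          = (((E x).2 : (ZMod (c * M))ˣ) : ZMod (c * M)) := by
        rw [hEsnd x, ZMod.castHom_apply, ZMod.natCast_val]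
      have h2 : ((((x⁻¹ : (ZMod (c * p * M))ˣ) : ZMod (c * p * M)).val : ℕ) : ZMod (c * M))
          = ((((E x).2)⁻¹ : (ZMod (c * M))ˣ) : ZMod (c * M)) := by
        rw [← hinv2, hEsnd x⁻¹, ZMod.castHom_apply, ZMod.natCast_val]
      have h3 : ((((E x).2 : (ZMod (c * M))ˣ) : ZMod (c * M)).val : ZMod (c * M))
          = (((E x).2 : (ZMod (c * M))ˣ) : ZMod (c * M)) := by
        rw [ZMod.natCast_val, ZMod.cast_id]
      have h4 : (((((E x).2)⁻¹ : (ZMod (c * M))ˣ) : ZMod (c * M)).val : ZMod (c * M))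
          = ((((E x).2)⁻¹ : (ZMod (c * M))ˣ) : ZMod (c * M)) := by
        rw [ZMod.natCast_val, ZMod.cast_id]
      push_cast
      rw [h1, h2, h3, h4]
      ring
  -- orthogonality
  have horth : ∀ z : ZMod p, (∑ ψ : DirichletCharacter ℂ p, ψ z)
      = if z = 1 then ((p.totient : ℕ) : ℂ) else 0 :=
    fun z => DirichletCharacter.sum_characters_eq ℂ z
  set T : ℂ := ((p.totient : ℕ) : ℂ) with hT
  set F' : (ZMod p)ˣ → ℂ := fun a =>
    ((if (a : ZMod p) = 1 then T else 0) - (if (a : ZMod p) = -1 then T else 0)) * F a with hF'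
  have step1 : (∑ ψ : DirichletCharacter ℂ p,
        (1 - ψ (-1)) * kloTwist ψ r n (c * p * M) ⟨c * M, by ring⟩)
      = ∑ x : (ZMod (c * p * M))ˣ, F' (E x).1 * G (E x).2 := by
    simp only [kloTwist, Finset.mul_sum]
    rw [Finset.sum_comm]
    refine Finset.sum_congr rfl fun x _ => ?_
    set z : ZMod p := ZMod.castHom hdvd_p (ZMod p) (x : ZMod (c * p * M)) with hz
    set ex : ℂ := eAdd (c * p * M) (r * ((x : ZMod (c * p * M)).val : ℤ)
        + n * (((x⁻¹ : (ZMod (c * p * M))ˣ) : ZMod (c * p * M)).val : ℤ)) with hex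
    have c1 : ∑ ψ : DirichletCharacter ℂ p, (1 - ψ (-1)) * (ψ z * ex)
        = (∑ ψ : DirichletCharacter ℂ p, (ψ z - ψ (-z))) * ex := by
      rw [Finset.sum_mul]
      refine Finset.sum_congr rfl fun ψ _ => ?_
      have hm : ψ (-z) = ψ (-1) * ψ z := by rw [← map_mul, neg_one_mul]
      rw [hm]; ring
    rw [c1, Finset.sum_sub_distrib, horth, horth]
    simp only [neg_eq_iff_eq_neg]
    have hz1 : z = ((E x).1 : ZMod p) := (hEfst x).symm
    rw [hex, hfactor x, hz1, hF']
    ring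
  rw [step1]
  have step2 : (∑ x : (ZMod (c * p * M))ˣ, F' (E x).1 * G (E x).2)
      = (∑ a : (ZMod p)ˣ, F' a) * (∑ b : (ZMod (c * M))ˣ, G b) :=
    sum_factor E.toEquiv _ F' G (fun x => rfl)
  rw [step2]
  have hGsum : (∑ b : (ZMod (c * M))ˣ, G b) = klo (pbar * r) (pbar * n) (c * M) := rfl
  -- evaluate ∑ F'
  have hval1 : (((1 : ZMod p).val : ℕ) : ZMod p) = 1 := by
    rw [ZMod.natCast_val, ZMod.cast_id]
  have hvalm1 : (((-1 : ZMod p).val : ℕ) : ZMod p) = -1 := by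
    rw [ZMod.natCast_val, ZMod.cast_id]
  have hF1 : F 1 = eAdd p (qbar * (r + n)) := by
    simp only [hF]
    refine eAdd_congr p ?_
    simp only [inv_one]
    push_cast
    rw [hval1]
    ring
  have hFm1 : F (-1) = eAdd p (-(qbar * (r + n))) := by
    simp only [hF]
    refine eAdd_congr p ?_
    simp only [inv_neg_one]
    push_cast
    rw [hvalm1]
    ring
  have hsumF' : (∑ a : (ZMod p)ˣ, F' a) = T * F 1 - T * F (-1) := by
    simp only [hF', sub_mul, ite_mul, zero_mul]
    rw [Finset.sum_sub_distrib]
    have e1 : ∀ a : (ZMod p)ˣ, (if (a : ZMod p) = 1 then T * F a else 0)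
        = (if a = 1 then T * F a else 0) := by
      intro a
      congr 1
      rw [eq_iff_iff]
      exact Units.val_eq_one
    have e2 : ∀ a : (ZMod p)ˣ, (if (a : ZMod p) = -1 then T * F a else 0)
        = (if a = -1 then T * F a else 0) := by
      intro a
      congr 1
      rw [eq_iff_iff]
      constructor
      · intro h
        ext
        rw [h, Units.val_neg, Units.val_one]
      · intro h
        rw [h, Units.val_neg, Units.val_one]
    rw [Finset.sum_congr rfl fun a _ => e1 a, Finset.sum_congr rfl fun a _ => e2 a,
      Finset.sum_ite_eq' Finset.univ (1 : (ZMod p)ˣ) (fun a => T * F a),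
      Finset.sum_ite_eq' Finset.univ (-1 : (ZMod p)ˣ) (fun a => T * F a)]
    simp
  rw [hGsum, hsumF', hF1, hFm1, hT]
  rw [Nat.totient_prime hp.out, Nat.cast_sub hp.out.one_le, Nat.cast_one]
  ring
end

section
/- Let M be a prime, let χ be a nontrivial Dirichlet character modulo M, and let v be an integer with gcd(v, M) = 1. Then ∑_{a mod M} D_χ(v·a; M) · conj( D_χ(a; M) ) equals M·(M − 2) if v ≡ 1 (mod M), and equals −M·(1 + χ(v)) if v ≢ 1 (mod M). Here conj denotes complex conjugation. -/
open Complex Finset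

/-- `D_χ(u; M) = ∑_{b mod M, (b(b−1),M)=1} χ̄(b−1) e_M((b* − 1) u)`. -/
noncomputable def dSum {M : ℕ} [NeZero M] (χ : DirichletCharacter ℂ M) (u : ℤ) : ℂ :=
  ∑ b ∈ Finset.univ.filter (fun b : ZMod M => Nat.gcd (b * (b - 1)).val M = 1),
    (starRingEnd ℂ) (χ (b - 1)) * eAdd M (((b⁻¹ - 1 : ZMod M).val : ℤ) * u)

section Aux

variable {M : ℕ} [hMp : Fact M.Prime]

lemma conj_stdAddChar [NeZero M] (z : ZMod M) :
    (starRingEnd ℂ) (ZMod.stdAddChar z) = ZMod.stdAddChar (-z) := by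
  rw [ZMod.stdAddChar_apply, ZMod.stdAddChar_apply, ← Circle.coe_inv_eq_conj,
    AddChar.map_neg_eq_inv]

lemma sum_std [NeZero M] (t : ZMod M) :
    ∑ a : ZMod M, ZMod.stdAddChar (t * a) = if t = 0 then (M : ℂ) else 0 := by
  simpa [mul_comm, ZMod.card] using
    AddChar.sum_mulShift t (ZMod.isPrimitive_stdAddChar M)

lemma chi_conj_mul_self (χ : DirichletCharacter ℂ M) {a : ZMod M} (ha : a ≠ 0) :
    χ a * (starRingEnd ℂ) (χ a) = 1 := by
  have hu : IsUnit a := isUnit_iff_ne_zero.mpr ha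
  have hn : ‖χ a‖ = 1 := by
    have := DirichletCharacter.unit_norm_eq_one χ hu.unit
    rwa [hu.unit_spec] at this
  rw [Complex.mul_conj', hn]
  norm_num

lemma chi_inv (χ : DirichletCharacter ℂ M) {a : ZMod M} (ha : a ≠ 0) :
    χ a⁻¹ = (starRingEnd ℂ) (χ a) := by
  have h1 : χ a⁻¹ * χ a = 1 := by rw [← map_mul, inv_mul_cancel₀ ha, map_one]
  have h2 := chi_conj_mul_self χ ha
  have hχa : χ a ≠ 0 := by
    intro h; rw [h, zero_mul] at h2; exact one_ne_zero h2.symm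
  rw [mul_comm] at h2
  exact mul_right_cancel₀ hχa (h1.trans h2.symm)

lemma myFilterEq :
    Finset.univ.filter (fun b : ZMod M => Nat.gcd (b * (b - 1)).val M = 1)
      = Finset.univ.filter (fun b : ZMod M => b ≠ 0 ∧ b ≠ 1) := by
  ext b
  simp only [mem_filter, mem_univ, true_and]
  rw [show (Nat.gcd (b * (b - 1)).val M = 1) ↔ Nat.Coprime M (b * (b - 1)).val from
    Nat.coprime_comm, hMp.out.coprime_iff_not_dvd, ← ZMod.natCast_eq_zero_iff,
    ZMod.natCast_val, ZMod.cast_id]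
  rw [show ¬(b * (b - 1) = 0) ↔ b * (b - 1) ≠ 0 from Iff.rfl, mul_ne_zero_iff, sub_ne_zero]

lemma dSum_eq (χ : DirichletCharacter ℂ M) (u : ℤ) :
    dSum χ u = ∑ b ∈ Finset.univ.filter (fun b : ZMod M => b ≠ 0 ∧ b ≠ 1),
      (starRingEnd ℂ) (χ (b - 1)) * ZMod.stdAddChar ((b⁻¹ - 1) * (u : ZMod M)) := by
  rw [dSum, myFilterEq]
  refine Finset.sum_congr rfl fun b _ => ?_
  congr 1
  rw [eAdd, ← ZMod.stdAddChar_coe]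
  congr 1
  push_cast [ZMod.natCast_val, ZMod.cast_id]
  ring

end Aux

/-- Second-moment evaluation of the character sum `D_χ`. -/
theorem stmt_5 (M : ℕ) [Fact M.Prime] (χ : DirichletCharacter ℂ M) (hχ : χ ≠ 1)
    (v : ℤ) (hv : Int.gcd v M = 1) :
    ∑ a : ZMod M, dSum χ (v * (a.val : ℤ)) * (starRingEnd ℂ) (dSum χ (a.val : ℤ)) =
      if ((v : ZMod M)) = 1 then (M : ℂ) * ((M : ℂ) - 2)
      else -(M : ℂ) * (1 + χ ((v : ZMod M))) := by
  have hp : M.Prime := Fact.out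
  have hv0 : (v : ZMod M) ≠ 0 := by
    rw [Ne, ZMod.intCast_zmod_eq_zero_iff_dvd]
    intro h
    have h2 : (M : ℤ) ∣ (Int.gcd v M : ℤ) := Int.dvd_coe_gcd h dvd_rfl
    rw [hv] at h2
    have := Int.le_of_dvd one_pos h2
    exact absurd (by exact_mod_cast this : M ≤ 1) (Nat.not_le.mpr hp.one_lt)
  -- Step 1: expand, orthogonality over a
  have hconj : ∀ u : ℤ, (starRingEnd ℂ) (dSum χ u)
      = ∑ c ∈ Finset.univ.filter (fun c : ZMod M => c ≠ 0 ∧ c ≠ 1),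
          χ (c - 1) * ZMod.stdAddChar (-((c⁻¹ - 1) * (u : ZMod M))) := by
    intro u
    rw [dSum_eq, map_sum]
    refine Finset.sum_congr rfl fun c _ => ?_
    rw [map_mul, Complex.conj_conj, conj_stdAddChar]
  have key : ∑ a : ZMod M, dSum χ (v * (a.val : ℤ)) * (starRingEnd ℂ) (dSum χ (a.val : ℤ))
      = ∑ b ∈ Finset.univ.filter (fun b : ZMod M => b ≠ 0 ∧ b ≠ 1),
          ∑ c ∈ Finset.univ.filter (fun c : ZMod M => c ≠ 0 ∧ c ≠ 1),
            ((starRingEnd ℂ) (χ (b - 1)) * χ (c - 1)) *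
              (if (b⁻¹ - 1) * (v : ZMod M) - (c⁻¹ - 1) = 0 then (M : ℂ) else 0) := by
    have step1 : ∀ a : ZMod M,
        dSum χ (v * (a.val : ℤ)) * (starRingEnd ℂ) (dSum χ (a.val : ℤ))
        = ∑ b ∈ Finset.univ.filter (fun b : ZMod M => b ≠ 0 ∧ b ≠ 1),
            ∑ c ∈ Finset.univ.filter (fun c : ZMod M => c ≠ 0 ∧ c ≠ 1),
              ((starRingEnd ℂ) (χ (b - 1)) * χ (c - 1)) *
                ZMod.stdAddChar ((((b⁻¹ - 1) * (v : ZMod M) - (c⁻¹ - 1))) * a) := by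
      intro a
      rw [dSum_eq, hconj, Finset.sum_mul_sum]
      refine Finset.sum_congr rfl fun b _ => Finset.sum_congr rfl fun c _ => ?_
      rw [mul_mul_mul_comm, ← AddChar.map_add_eq_mul]
      have hcast : ((v * (a.val : ℤ) : ℤ) : ZMod M) = (v : ZMod M) * a := by
        push_cast [ZMod.natCast_val, ZMod.cast_id]; ring
      have hcast2 : (((a.val : ℤ) : ℤ) : ZMod M) = a := by
        push_cast [ZMod.natCast_val, ZMod.cast_id]; ring
      rw [hcast, hcast2]
      congr 1
      ring
    calc ∑ a : ZMod M, dSum χ (v * (a.val : ℤ)) * (starRingEnd ℂ) (dSum χ (a.val : ℤ))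
        = ∑ a : ZMod M, ∑ b ∈ Finset.univ.filter (fun b : ZMod M => b ≠ 0 ∧ b ≠ 1),
            ∑ c ∈ Finset.univ.filter (fun c : ZMod M => c ≠ 0 ∧ c ≠ 1),
              ((starRingEnd ℂ) (χ (b - 1)) * χ (c - 1)) *
                ZMod.stdAddChar ((((b⁻¹ - 1) * (v : ZMod M) - (c⁻¹ - 1))) * a) :=
          Finset.sum_congr rfl fun a _ => step1 a
      _ = _ := by
          rw [Finset.sum_comm]
          refine Finset.sum_congr rfl fun b _ => ?_
          rw [Finset.sum_comm]
          refine Finset.sum_congr rfl fun c _ => ?_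
          rw [← Finset.mul_sum, sum_std]
  -- Step 2: evaluate the inner sum over c
  have step2 : ∀ b ∈ Finset.univ.filter (fun b : ZMod M => b ≠ 0 ∧ b ≠ 1),
      (∑ c ∈ Finset.univ.filter (fun c : ZMod M => c ≠ 0 ∧ c ≠ 1),
          ((starRingEnd ℂ) (χ (b - 1)) * χ (c - 1)) *
            (if (b⁻¹ - 1) * (v : ZMod M) - (c⁻¹ - 1) = 0 then (M : ℂ) else 0))
      = ((M : ℂ) * χ ((v : ZMod M))) *
          (starRingEnd ℂ) (χ (b * (1 - (v : ZMod M)) + (v : ZMod M))) := by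
    intro b hb
    obtain ⟨hb0, hb1⟩ : b ≠ 0 ∧ b ≠ 1 := by simpa using hb
    set w : ZMod M := 1 + (b⁻¹ - 1) * (v : ZMod M) with hw
    have hbb : b * b⁻¹ = 1 := mul_inv_cancel₀ hb0
    have hbw : b * (1 - (v : ZMod M)) + (v : ZMod M) = b * w := by
      rw [hw]; linear_combination (-(v : ZMod M)) * hbb
    have hcond : ∀ c : ZMod M, ((b⁻¹ - 1) * (v : ZMod M) - (c⁻¹ - 1) = 0) ↔ c = w⁻¹ := by
      intro c
      rw [sub_eq_zero, eq_comm, sub_eq_iff_eq_add, hw, add_comm ((b⁻¹ - 1) * (v : ZMod M)) 1]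
      constructor
      · intro h; rw [← h, inv_inv]
      · intro h; rw [h, inv_inv]
    have hsum : (∑ c ∈ Finset.univ.filter (fun c : ZMod M => c ≠ 0 ∧ c ≠ 1),
        ((starRingEnd ℂ) (χ (b - 1)) * χ (c - 1)) *
          (if (b⁻¹ - 1) * (v : ZMod M) - (c⁻¹ - 1) = 0 then (M : ℂ) else 0))
        = if w⁻¹ ∈ Finset.univ.filter (fun c : ZMod M => c ≠ 0 ∧ c ≠ 1) then
            ((starRingEnd ℂ) (χ (b - 1)) * χ (w⁻¹ - 1)) * (M : ℂ) else 0 := by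
      rw [← Finset.sum_ite_eq' (Finset.univ.filter (fun c : ZMod M => c ≠ 0 ∧ c ≠ 1)) (w⁻¹)
        (fun c => ((starRingEnd ℂ) (χ (b - 1)) * χ (c - 1)) * (M : ℂ))]
      refine Finset.sum_congr rfl fun c _ => ?_
      by_cases h : c = w⁻¹
      · subst h; rw [if_pos ((hcond _).mpr rfl), if_pos rfl]
      · rw [if_neg (fun hc => h ((hcond c).mp hc)), if_neg h, mul_zero]
    rw [hsum]
    by_cases hw0 : w = 0
    · have h0 : w⁻¹ ∉ Finset.univ.filter (fun c : ZMod M => c ≠ 0 ∧ c ≠ 1) := by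
        simp [hw0]
      rw [if_neg h0, hbw, hw0, mul_zero]
      have hz : χ (0 : ZMod M) = 0 := χ.map_nonunit not_isUnit_zero
      rw [hz, map_zero, mul_zero]
    · have hw1 : w ≠ 1 := by
        rw [hw]
        intro h
        have h' : (b⁻¹ - 1) * (v : ZMod M) = 0 := by linear_combination h
        rcases mul_eq_zero.mp h' with h1 | h1
        · exact hb1 (by rw [← inv_inv b, sub_eq_zero.mp h1, inv_one])
        · exact hv0 h1
      have hmem : w⁻¹ ∈ Finset.univ.filter (fun c : ZMod M => c ≠ 0 ∧ c ≠ 1) := by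
        simp only [mem_filter, mem_univ, true_and]
        exact ⟨inv_ne_zero hw0, fun h => hw1 (by rw [← inv_inv w, h, inv_one])⟩
      rw [if_pos hmem]
      have hbwne : b * w ≠ 0 := mul_ne_zero hb0 hw0
      have hww : w * w⁻¹ = 1 := mul_inv_cancel₀ hw0
      have h1 : (w⁻¹ - 1) * (b * w) = (v : ZMod M) * (b - 1) := by
        calc (w⁻¹ - 1) * (b * w) = b * (w * w⁻¹) - b * w := by ring
          _ = b * 1 - (b * (1 - (v : ZMod M)) + (v : ZMod M)) := by rw [hww, ← hbw]
          _ = (v : ZMod M) * (b - 1) := by ring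
      have harg : w⁻¹ - 1 = (v : ZMod M) * (b - 1) * (b * w)⁻¹ := by
        rw [← h1, mul_assoc, mul_inv_cancel₀ hbwne, mul_one]
      rw [harg, map_mul, map_mul, chi_inv χ hbwne, hbw]
      have hb1' : b - 1 ≠ 0 := sub_ne_zero.mpr hb1
      have hcc := chi_conj_mul_self χ hb1'
      linear_combination ((M : ℂ) * χ ((v : ZMod M)) * (starRingEnd ℂ) (χ (b * w))) * hcc
  -- Step 3: conclude
  rw [key, Finset.sum_congr rfl step2, ← Finset.mul_sum]
  by_cases hone : ((v : ZMod M)) = 1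
  · rw [if_pos hone, hone]
    have hcard : (Finset.univ.filter (fun b : ZMod M => b ≠ 0 ∧ b ≠ 1)).card = M - 2 := by
      have hset : Finset.univ.filter (fun b : ZMod M => b ≠ 0 ∧ b ≠ 1)
          = Finset.univ \ ({0, 1} : Finset (ZMod M)) := by
        ext x
        simp [not_or]
      rw [hset, Finset.card_sdiff_of_subset (Finset.subset_univ _), Finset.card_univ, ZMod.card]
      congr 1
      rw [show ({0, 1} : Finset (ZMod M)) = insert 0 {1} from rfl,
        Finset.card_insert_of_notMem (by simp), Finset.card_singleton]
    simp only [sub_self, mul_zero, zero_add, map_one, mul_one]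
    rw [Finset.sum_const, hcard, nsmul_eq_mul, mul_one, Nat.cast_sub hp.two_le]
    norm_num
  · rw [if_neg hone]
    have hone' : ((v : ZMod M)) ≠ 1 := hone
    have h1v : (1 : ZMod M) - (v : ZMod M) ≠ 0 := sub_ne_zero.mpr (fun h => hone h.symm)
    have himg : ∑ b ∈ Finset.univ.filter (fun b : ZMod M => b ≠ 0 ∧ b ≠ 1),
          (starRingEnd ℂ) (χ (b * (1 - (v : ZMod M)) + (v : ZMod M)))
        = ∑ t ∈ Finset.univ \ ({(v : ZMod M), 1} : Finset (ZMod M)), (starRingEnd ℂ) (χ t) := by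
      refine Finset.sum_nbij' (i := fun b => b * (1 - (v : ZMod M)) + (v : ZMod M))
        (j := fun t => (t - (v : ZMod M)) * (1 - (v : ZMod M))⁻¹) ?_ ?_ ?_ ?_ ?_
      · intro a ha
        obtain ⟨ha0, ha1⟩ : a ≠ 0 ∧ a ≠ 1 := by simpa using ha
        simp only [Finset.mem_sdiff, Finset.mem_univ, true_and, Finset.mem_insert,
          Finset.mem_singleton, not_or]
        constructor
        · intro h
          exact mul_ne_zero ha0 h1v (by linear_combination h)
        · intro h
          exact mul_ne_zero (sub_ne_zero.mpr ha1) h1v (by linear_combination h)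
      · intro t ht
        obtain ⟨htv, ht1⟩ : ¬(t = (v : ZMod M)) ∧ ¬(t = 1) := by
          simpa [not_or] using ht
        simp only [Finset.mem_filter, Finset.mem_univ, true_and]
        constructor
        · exact mul_ne_zero (sub_ne_zero.mpr htv) (inv_ne_zero h1v)
        · intro h
          apply ht1
          have h2 : t - (v : ZMod M) = 1 - (v : ZMod M) := by
            calc t - (v : ZMod M)
                = ((t - (v : ZMod M)) * (1 - (v : ZMod M))⁻¹) * (1 - (v : ZMod M)) := by
                  rw [mul_assoc, inv_mul_cancel₀ h1v, mul_one]
              _ = 1 - (v : ZMod M) := by rw [h, one_mul]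
          linear_combination h2
      · intro a _
        field_simp
        ring
      · intro t _
        field_simp
        ring
      · intro a _
        rfl
    rw [himg, Finset.sum_sdiff_eq_sub (Finset.subset_univ _), ← map_sum,
      MulChar.sum_eq_zero_of_ne_one hχ, map_zero,
      Finset.sum_pair (show (v : ZMod M) ≠ 1 from hone'), zero_sub]
    simp only [map_one]
    have hcc := chi_conj_mul_self χ hv0
    linear_combination (-(M : ℂ)) * hcc
end
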